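/- Assume 0 < q < 1, α > 0 and (4q+2)/3 < p < q + 1. Then g(x(t)) − g* = O(1/t^{4q−2p+2}) as t → ∞. -/

import Mathlib

open Filter Topology Set MeasureTheory
open scoped InnerProductSpace

lemma amgm_aux (u v L : ℝ) (hu : 0 ≤ u) (hv : 0 ≤ v) (h : L * L ≤ u * v) :
    L ≤ (u + v) / 2 := by
  nlinarith [sq_nonneg (u - v), sq_nonneg (u + v - 2 * L)]

lemma young_aux (k m β δ A B W c : ℝ) (hc : 0 < c) (hβ : 0 ≤ β) (hδ : 0 ≤ δ)
    (hA : 0 ≤ A) (hW : 0 ≤ W) (hB : B * B ≤ A * W) (hm : m * m = β * δ) :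
    k * m * B ≤ c / 2 * (β * W) + k ^ 2 / (2 * c) * (δ * A) := by
  have hL : (k * m * B) * (k * m * B) ≤ (c * (β * W)) * (k ^ 2 / c * (δ * A)) := by
    have h1 : (c * (β * W)) * (k ^ 2 / c * (δ * A)) = k ^ 2 * (β * δ) * (A * W) := by
      field_simp
    have h2 : (k * m * B) * (k * m * B) = k ^ 2 * (β * δ) * (B * B) := by
      rw [← hm]; ring
    rw [h1, h2]
    have hk : 0 ≤ k ^ 2 * (β * δ) := by positivity
    exact mul_le_mul_of_nonneg_left hB hk
  have := amgm_aux (c * (β * W)) (k ^ 2 / c * (δ * A)) (k * m * B)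
    (by positivity) (by positivity) hL
  calc k * m * B ≤ (c * (β * W) + k ^ 2 / c * (δ * A)) / 2 := this
    _ = c / 2 * (β * W) + k ^ 2 / (2 * c) * (δ * A) := by field_simp

lemma grad_convex_ineq {H : Type*} [NormedAddCommGroup H] [InnerProductSpace ℝ H]
    [CompleteSpace H]
    (g : H → ℝ) (g' : H → H) (hconv : ConvexOn ℝ Set.univ g)
    (hgrad : ∀ y, HasGradientAt g (g' y) y) (u v : H) :
    ⟪g' u, v - u⟫_ℝ ≤ g v - g u := by
  set φ : ℝ → ℝ := fun s => g (u + s • (v - u)) with hφ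
  have hline : ∀ s : ℝ, HasDerivAt (fun s : ℝ => u + s • (v - u)) (v - u) s := by
    intro s
    simpa using ((hasDerivAt_id s).smul_const (v - u)).const_add u
  have hφd : HasDerivAt φ ⟪g' u, v - u⟫_ℝ 0 := by
    have h1 : HasDerivAt φ ((InnerProductSpace.toDual ℝ H (g' (u + (0:ℝ) • (v - u)))) (v - u)) 0 := by
      exact ((hgrad _).hasFDerivAt.comp_hasDerivAt 0 (hline 0))
    simpa [InnerProductSpace.toDual_apply_apply] using h1
  have hslope : ∀ s ∈ Ioc (0:ℝ) 1, slope φ 0 s ≤ g v - g u := by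
    intro s hs
    have hconv2 := hconv.2 (mem_univ u) (mem_univ v) (by linarith [hs.2] : (0:ℝ) ≤ 1 - s)
      (le_of_lt hs.1) (by ring)
    have heq : (1 - s) • u + s • v = u + s • (v - u) := by module
    rw [heq] at hconv2
    have h0 : φ 0 = g u := by simp [hφ]
    have hss : φ s ≤ (1 - s) * g u + s * g v := by simpa [hφ] using hconv2
    rw [slope_def_field, sub_zero, div_le_iff₀ hs.1]
    nlinarith [hs.1]
  have htend : Tendsto (slope φ 0) (𝓝[>] 0) (𝓝 ⟪g' u, v - u⟫_ℝ) :=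
    (hasDerivAt_iff_tendsto_slope.mp hφd).mono_left
      (nhdsWithin_mono _ (fun y hy => ne_of_gt hy))
  refine le_of_tendsto htend ?_
  filter_upwards [Ioc_mem_nhdsGT (by norm_num : (0:ℝ) < 1)] with s hs
  exact hslope s hs

set_option maxHeartbeats 2000000 in
theorem stmt15
    {H : Type*} [NormedAddCommGroup H] [InnerProductSpace ℝ H] [CompleteSpace H]
    (g : H → ℝ) (g' : H → H)
    (hg_convex : ConvexOn ℝ Set.univ g)
    (hg_grad : ∀ y : H, HasGradientAt g (g' y) y)
    (hg_lip : ∀ s : Set H, Bornology.IsBounded s → ∃ K : NNReal, LipschitzOnWith K g' s)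
    (t₀ α q a p : ℝ) (ht₀ : 0 < t₀) (hα : 0 < α) (hq0 : 0 < q) (ha0 : 0 < a) (hp0 : 0 < p)
    (x x' x'' : ℝ → H)
    (hx : ∀ t ≥ t₀, HasDerivAt x (x' t) t)
    (hx' : ∀ t ≥ t₀, HasDerivAt x' (x'' t) t)
    (hx''c : ContinuousOn x'' (Set.Ici t₀))
    (hODE : ∀ t ≥ t₀, x'' t + (α / t ^ q) • x' t + g' (x t) + (a / t ^ p) • x t = 0)
    (xstar : H) (hxstar : ∀ y : H, g xstar ≤ g y)
    (hq1 : q < 1) (hp1 : (4 * q + 2) / 3 < p) (hp2 : p < q + 1) :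
    (∃ C > (0:ℝ), ∃ t₁ ≥ t₀, ∀ t ≥ t₁, |g (x t) - g xstar| ≤ C / t ^ (4 * q - 2 * p + 2)) := by
  clear hg_lip hx''c
  obtain ⟨r, hrdef⟩ : ∃ r : ℝ, r = 4 * q - 2 * p + 2 := ⟨_, rfl⟩
  rw [show (4:ℝ) * q - 2 * p + 2 = r from hrdef.symm]
  have hr0 : 0 < r := by rw [hrdef]; linarith
  have hr2 : r < 2 := by rw [hrdef]; linarith
  have hrp : r < p := by rw [hrdef]; linarith
  have hq1r : 0 < q + 1 - r := by rw [hrdef]; linarith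
  obtain ⟨k, hkdef⟩ : ∃ k : ℝ, k = r * (2 * r - 1) := ⟨_, rfl⟩
  obtain ⟨c₅, hc5def⟩ : ∃ c : ℝ, c = a * r * ⟪xstar, xstar⟫_ℝ / (2 * (p - r)) := ⟨_, rfl⟩
  have hc₅0 : 0 ≤ c₅ := by
    rw [hc5def]
    apply div_nonneg
    · exact mul_nonneg (mul_nonneg ha0.le hr0.le) real_inner_self_nonneg
    · linarith
  set E : ℝ → ℝ := fun s => s ^ r * (g (x s) - g xstar)
    + a / 2 * (s ^ (r - p) * ⟪x s, x s⟫_ℝ)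
    + r ^ 2 / 2 * (s ^ (r - 2) * ⟪x s - xstar, x s - xstar⟫_ℝ)
    + r * (s ^ (r - 1) * ⟪x s - xstar, x' s⟫_ℝ)
    + 1 / 2 * (s ^ r * ⟪x' s, x' s⟫_ℝ)
    + α * r / 2 * (s ^ (r - q - 1) * ⟪x s - xstar, x s - xstar⟫_ℝ)
    + c₅ * s ^ (r - p) with hEdef
  set D : ℝ → ℝ := fun t =>
    r * t ^ (r - 1) * (g (x t) - g xstar - ⟪g' (x t), x t - xstar⟫_ℝ)
    - a * p / 2 * (t ^ (r - p - 1) * ⟪x t, x t⟫_ℝ)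
    + (r ^ 2 * (r - 2) / 2 * t ^ (r - 3) - α * r * (q + 1 - r) / 2 * t ^ (r - q - 2)
        - a * r / 2 * t ^ (r - p - 1)) * ⟪x t - xstar, x t - xstar⟫_ℝ
    + k * (t ^ (r - 2) * ⟪x t - xstar, x' t⟫_ℝ)
    + (3 * r / 2 * t ^ (r - 1) - α * t ^ (r - q)) * ⟪x' t, x' t⟫_ℝ with hDdef
  -- derivative of E
  have hE : ∀ t, t₀ ≤ t → HasDerivAt E (D t) t := by
    intro t ht0
    have htp : 0 < t := lt_of_lt_of_le ht₀ ht0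
    have hxt := hx t ht0
    have hx't := hx' t ht0
    have hu : HasDerivAt (fun s => x s - xstar) (x' t) t := hxt.sub_const xstar
    have hN : HasDerivAt (fun s => ⟪x s, x s⟫_ℝ) (⟪x t, x' t⟫_ℝ + ⟪x' t, x t⟫_ℝ) t :=
      HasDerivAt.inner ℝ hxt hxt
    have hAd : HasDerivAt (fun s => ⟪x s - xstar, x s - xstar⟫_ℝ)
        (⟪x t - xstar, x' t⟫_ℝ + ⟪x' t, x t - xstar⟫_ℝ) t := HasDerivAt.inner ℝ hu hu
    have hBd : HasDerivAt (fun s => ⟪x s - xstar, x' s⟫_ℝ)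
        (⟪x t - xstar, x'' t⟫_ℝ + ⟪x' t, x' t⟫_ℝ) t := HasDerivAt.inner ℝ hu hx't
    have hWd : HasDerivAt (fun s => ⟪x' s, x' s⟫_ℝ)
        (⟪x' t, x'' t⟫_ℝ + ⟪x'' t, x' t⟫_ℝ) t := HasDerivAt.inner ℝ hx't hx't
    have hγ : HasDerivAt (fun s => g (x s)) ⟪g' (x t), x' t⟫_ℝ t := by
      have h1 := (hg_grad (x t)).hasFDerivAt.comp_hasDerivAt t hxt
      rw [InnerProductSpace.toDual_apply_apply] at h1
      exact h1
    have hpow : ∀ e : ℝ, HasDerivAt (fun s : ℝ => s ^ e) (e * t ^ (e - 1)) t :=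
      fun e => Real.hasDerivAt_rpow_const (Or.inl (ne_of_gt htp))
    have hT1 := (hpow r).mul (hγ.sub_const (g xstar))
    have hT2 := ((hpow (r - p)).mul hN).const_mul (a / 2)
    have hT3 := ((hpow (r - 2)).mul hAd).const_mul (r ^ 2 / 2)
    have hT4 := ((hpow (r - 1)).mul hBd).const_mul r
    have hT5 := ((hpow r).mul hWd).const_mul ((1:ℝ) / 2)
    have hT6 := ((hpow (r - q - 1)).mul hAd).const_mul (α * r / 2)
    have hT7 := (hpow (r - p)).const_mul c₅
    have hraw := ((((((hT1.add hT2).add hT3).add hT4).add hT5).add hT6).add hT7)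
    convert hraw using 1
    · rfl
    · rfl
    · rfl
    -- value identity
    have h0 := hODE t ht0
    rw [add_assoc, add_assoc] at h0
    have hode := eq_neg_of_add_eq_zero_left h0
    simp only [D]
    rw [hode]
    simp only [inner_neg_right, inner_neg_left, inner_add_right, inner_add_left,
      real_inner_smul_right, real_inner_smul_left]
    have hux : ⟪x t - xstar, x t⟫_ℝ
        = (⟪x t - xstar, x t - xstar⟫_ℝ + ⟪x t, x t⟫_ℝ - ⟪xstar, xstar⟫_ℝ) / 2 := by
      simp only [inner_sub_left, inner_sub_right]
      rw [real_inner_comm xstar (x t)]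
      ring
    rw [hux, real_inner_comm (x' t) (x t), real_inner_comm (x' t) (x t - xstar),
      real_inner_comm (x' t) (g' (x t)), real_inner_comm (x t - xstar) (g' (x t))]
    rw [show r - 1 - 1 = r - 2 from by ring, show r - 2 - 1 = r - 3 from by ring,
      show r - q - 1 - 1 = r - q - 2 from by ring]
    have hq1' : t ^ (r - q - 1) = t ^ (r - 1) / t ^ q := by
      rw [show r - q - 1 = r - 1 - q from by ring, Real.rpow_sub htp]
    have hq2' : t ^ (r - q) = t ^ r / t ^ q := Real.rpow_sub htp r q
    have hq3' : t ^ (r - q - 2) = t ^ (r - 2) / t ^ q := by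
      rw [show r - q - 2 = r - 2 - q from by ring, Real.rpow_sub htp]
    have hp1' : t ^ (r - p - 1) = t ^ (r - 1) / t ^ p := by
      rw [show r - p - 1 = r - 1 - p from by ring, Real.rpow_sub htp]
    have hp2' : t ^ (r - p) = t ^ r / t ^ p := Real.rpow_sub htp r p
    rw [hq1', hq2', hq3', hp1', hp2', hc5def, hkdef]
    have hqne : t ^ q ≠ 0 := ne_of_gt (Real.rpow_pos_of_pos htp q)
    have hpne : t ^ p ≠ 0 := ne_of_gt (Real.rpow_pos_of_pos htp p)
    have hprne : p - r ≠ 0 := ne_of_gt (by linarith)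
    field_simp
    ring
  -- pointwise sign of D
  have hD0 : ∀ t, t₀ ≤ t → 3 * r ≤ α * t ^ (1 - q) → k ^ 2 / α * t ^ (p + q - 3) ≤ a * r →
      D t ≤ 0 := by
    intro t ht0 hc1 hc2
    have htp : 0 < t := lt_of_lt_of_le ht₀ ht0
    simp only [hDdef]
    set A := ⟪x t - xstar, x t - xstar⟫_ℝ with hA
    set B := ⟪x t - xstar, x' t⟫_ℝ with hB
    set N := ⟪x t, x t⟫_ℝ with hNd
    set W := ⟪x' t, x' t⟫_ℝ with hW
    have hA0 : 0 ≤ A := by rw [hA]; exact real_inner_self_nonneg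
    have hW0 : 0 ≤ W := by rw [hW]; exact real_inner_self_nonneg
    have hN0 : 0 ≤ N := by rw [hNd]; exact real_inner_self_nonneg
    have hCS : B * B ≤ A * W := by rw [hA, hB, hW]; exact real_inner_mul_inner_self_le _ _
    have hm : t ^ (r-2) * t ^ (r-2) = t ^ (r-q) * t ^ (r+q-4) := by
      rw [← Real.rpow_add htp, ← Real.rpow_add htp]; congr 1; ring
    have hyoung := young_aux k (t^(r-2)) (t^(r-q)) (t^(r+q-4)) A B W α hα
      (Real.rpow_nonneg htp.le _) (Real.rpow_nonneg htp.le _) hA0 hW0 hCS hm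
    have hs1 : g (x t) - g xstar - ⟪g' (x t), x t - xstar⟫_ℝ ≤ 0 := by
      have hgi := grad_convex_ineq g g' hg_convex hg_grad (x t) xstar
      rw [show xstar - x t = -(x t - xstar) from (neg_sub _ _).symm, inner_neg_right] at hgi
      linarith
    have e1 : r * t ^ (r-1) * (g (x t) - g xstar - ⟪g' (x t), x t - xstar⟫_ℝ) ≤ 0 :=
      mul_nonpos_of_nonneg_of_nonpos (mul_nonneg hr0.le (Real.rpow_nonneg htp.le _)) hs1
    have e2 : 0 ≤ a * p / 2 * (t ^ (r-p-1) * N) :=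
      mul_nonneg (by positivity) (mul_nonneg (Real.rpow_nonneg htp.le _) hN0)
    have p3 : k^2/(2*α) * t^(r+q-4) ≤ a*r/2 * t^(r-p-1) := by
      have h34 : t^(r+q-4) = t^(p+q-3) * t^(r-p-1) := by
        rw [← Real.rpow_add htp]; congr 1; ring
      have h35 := mul_le_mul_of_nonneg_right hc2 (Real.rpow_nonneg htp.le (r-p-1))
      calc k^2/(2*α) * t^(r+q-4) = (k^2/α * t^(p+q-3) * t^(r-p-1))/2 := by
            rw [h34]; ring
        _ ≤ a*r*t^(r-p-1)/2 := by linarith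
        _ = a*r/2*t^(r-p-1) := by ring
    have e3coef : r^2*(r-2)/2 * t^(r-3) - α*r*(q+1-r)/2 * t^(r-q-2) - a*r/2*t^(r-p-1)
        + k^2/(2*α) * t^(r+q-4) ≤ 0 := by
      have p1 : r^2*(r-2)/2 * t^(r-3) ≤ 0 :=
        mul_nonpos_of_nonpos_of_nonneg (by nlinarith [mul_nonneg (sq_nonneg r) (sub_nonneg.mpr hr2.le)]) (Real.rpow_nonneg htp.le _)
      have hco : 0 ≤ α*r*(q+1-r)/2 := by
        have := mul_pos (mul_pos hα hr0) hq1r; linarith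
      have p2 : 0 ≤ α*r*(q+1-r)/2 * t^(r-q-2) :=
        mul_nonneg hco (Real.rpow_nonneg htp.le _)
      linarith
    have e3 : (r^2*(r-2)/2 * t^(r-3) - α*r*(q+1-r)/2 * t^(r-q-2) - a*r/2*t^(r-p-1)
        + k^2/(2*α) * t^(r+q-4)) * A ≤ 0 := mul_nonpos_of_nonpos_of_nonneg e3coef hA0
    have hrq : t^(r-q) = t^(1-q) * t^(r-1) := by
      rw [← Real.rpow_add htp]; congr 1; ring
    have e4c : 3*r/2 * t^(r-1) - α/2 * t^(r-q) ≤ 0 := by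
      have h36 := mul_le_mul_of_nonneg_right hc1 (Real.rpow_nonneg htp.le (r-1))
      rw [hrq]; nlinarith [h36]
    have e4 : (3*r/2 * t^(r-1) - α/2 * t^(r-q)) * W ≤ 0 :=
      mul_nonpos_of_nonpos_of_nonneg e4c hW0
    nlinarith [e1, e2, e3, e4, hyoung]
  -- eventual conditions
  have hev1 : ∀ᶠ t : ℝ in atTop, 3 * r ≤ α * t ^ (1 - q) :=
    ((tendsto_rpow_atTop (by linarith : (0:ℝ) < 1 - q)).const_mul_atTop hα).eventually_ge_atTop (3 * r)
  have hev2 : ∀ᶠ t : ℝ in atTop, k ^ 2 / α * t ^ (p + q - 3) ≤ a * r := by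
    have h0 : Tendsto (fun t : ℝ => k ^ 2 / α * t ^ (p + q - 3)) atTop (𝓝 (k ^ 2 / α * 0)) := by
      rw [show p + q - 3 = -(3 - p - q) from by ring]
      exact (tendsto_rpow_neg_atTop (by linarith)).const_mul _
    rw [mul_zero] at h0
    have har : 0 < a * r := mul_pos ha0 hr0
    filter_upwards [h0.eventually (Iio_mem_nhds har)] with s hs
    exact le_of_lt hs
  obtain ⟨T, hT⟩ := eventually_atTop.mp ((eventually_ge_atTop t₀).and (hev1.and hev2))
  set t₁ := max T t₀ with ht₁def
  have ht₁t₀ : t₀ ≤ t₁ := le_max_right _ _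
  have hcond : ∀ t, t₁ ≤ t →
      t₀ ≤ t ∧ 3 * r ≤ α * t ^ (1 - q) ∧ k ^ 2 / α * t ^ (p + q - 3) ≤ a * r :=
    fun t ht => hT t (le_trans (le_max_left _ _) ht)
  have hanti : AntitoneOn E (Ici t₁) := by
    apply antitoneOn_of_deriv_nonpos (convex_Ici t₁)
    · intro s hs
      exact (hE s (hcond s hs).1).continuousAt.continuousWithinAt
    · intro s hs
      rw [interior_Ici] at hs
      exact (hE s (hcond s (le_of_lt hs)).1).differentiableAt.differentiableWithinAt
    · intro s hs
      rw [interior_Ici] at hs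
      rw [(hE s (hcond s (le_of_lt hs)).1).deriv]
      exact hD0 s (hcond s (le_of_lt hs)).1 (hcond s (le_of_lt hs)).2.1 (hcond s (le_of_lt hs)).2.2
  -- lower bound on E
  have hlower : ∀ t, t₀ ≤ t → t ^ r * (g (x t) - g xstar) ≤ E t := by
    intro t ht0
    have htp : 0 < t := lt_of_lt_of_le ht₀ ht0
    simp only [hEdef]
    set A := ⟪x t - xstar, x t - xstar⟫_ℝ with hA
    set B := ⟪x t - xstar, x' t⟫_ℝ with hB
    set N := ⟪x t, x t⟫_ℝ with hNd
    set W := ⟪x' t, x' t⟫_ℝ with hW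
    have hA0 : 0 ≤ A := by rw [hA]; exact real_inner_self_nonneg
    have hW0 : 0 ≤ W := by rw [hW]; exact real_inner_self_nonneg
    have hN0 : 0 ≤ N := by rw [hNd]; exact real_inner_self_nonneg
    have hCS : B * B ≤ A * W := by rw [hA, hB, hW]; exact real_inner_mul_inner_self_le _ _
    have hm2 : t ^ (r-1) * t ^ (r-1) = t ^ r * t ^ (r-2) := by
      rw [← Real.rpow_add htp, ← Real.rpow_add htp]; congr 1; ring
    have hy2 := young_aux (-r) (t^(r-1)) (t^r) (t^(r-2)) A B W 1 one_pos
      (Real.rpow_nonneg htp.le _) (Real.rpow_nonneg htp.le _) hA0 hW0 hCS hm2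
    have h2 : 0 ≤ a / 2 * (t ^ (r - p) * N) :=
      mul_nonneg (by positivity) (mul_nonneg (Real.rpow_nonneg htp.le _) hN0)
    have h6 : 0 ≤ α * r / 2 * (t ^ (r - q - 1) * A) :=
      mul_nonneg (div_nonneg (mul_nonneg hα.le hr0.le) (by norm_num))
        (mul_nonneg (Real.rpow_nonneg htp.le _) hA0)
    have h7 : 0 ≤ c₅ * t ^ (r - p) := mul_nonneg hc₅0 (Real.rpow_nonneg htp.le _)
    nlinarith [hy2, h2, h6, h7]
  have hEt₁0 : 0 ≤ E t₁ :=
    le_trans (mul_nonneg (Real.rpow_nonneg (lt_of_lt_of_le ht₀ ht₁t₀).le r)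
      (sub_nonneg.2 (hxstar (x t₁)))) (hlower t₁ ht₁t₀)
  refine ⟨E t₁ + 1, by linarith, t₁, ht₁t₀, ?_⟩
  intro t ht
  have ht0 : t₀ ≤ t := le_trans ht₁t₀ ht
  have htp : 0 < t := lt_of_lt_of_le ht₀ ht0
  have hEm : E t ≤ E t₁ := hanti self_mem_Ici (mem_Ici.mpr ht) ht
  have h1 : t ^ r * (g (x t) - g xstar) ≤ E t₁ := le_trans (hlower t ht0) hEm
  have hgg : 0 ≤ g (x t) - g xstar := sub_nonneg.2 (hxstar _)
  rw [abs_of_nonneg hgg, le_div_iff₀ (Real.rpow_pos_of_pos htp _)]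
  nlinarith [h1]
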